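/- Fix η ∈ (0,1). There exists N₀ (depending only on η) such that for every integer N ≥ N₀, every real Δ ≥ 1, and every λ with 0 < λ ≤ η²/(128 N²), the first hitting time T₀ of (−∞, 0] for the downward-drifted walk started at Δ satisfies E[e^{λ T₀}] ≤ (3/2) · exp(2ΔNλ/η). -/

import Mathlib

open MeasureTheory ProbabilityTheory ENNReal

lemma aux_exp_quad {x : ℝ} (h0 : 0 ≤ x) (h1 : x ≤ 1) : Real.exp x ≤ 1 + x + x^2 := by
  have h := Real.exp_bound' h0 h1 (n := 2) (by norm_num)
  simp [Finset.sum_range_succ, Nat.factorial] at h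
  nlinarith [sq_nonneg x]

lemma aux_exp_neg {y : ℝ} (h0 : 0 ≤ y) (h1 : y ≤ 1) : Real.exp (-y) ≤ 1 - y/2 := by
  have h1' : 1 + y ≤ Real.exp y := by linarith [Real.add_one_le_exp y]
  have hy : (0:ℝ) < 1 + y := by linarith
  rw [Real.exp_neg]
  have h2 : (Real.exp y)⁻¹ ≤ (1+y)⁻¹ := by
    apply inv_anti₀ hy h1'
  have h3 : (1+y)⁻¹ ≤ 1 - y/2 := by
    rw [inv_eq_one_div, div_le_iff₀ hy]
    nlinarith
  linarith

lemma aux_step_bound {η n : ℝ} (hη0 : 0 < η) (hη1 : η < 1) (hn : 2 ≤ n) :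
    Real.exp ((η/2) * (1 - 1/n)) * ((1-η)/n) + Real.exp ((η/2) * (-(1/n))) * (1 - (1-η)/n)
      ≤ Real.exp (-(η^2/(4*n))) := by
  have hn0 : (0:ℝ) < n := by linarith
  set t : ℝ := η/2 with ht
  set p : ℝ := (1-η)/n with hp
  have hp0 : 0 ≤ p := div_nonneg (by linarith) hn0.le
  have hp1 : p ≤ 1 := by
    rw [hp, div_le_one hn0]; linarith
  have ht0 : 0 ≤ t := by positivity
  have ht1 : t ≤ 1 := by rw [ht]; linarith
  have key : Real.exp (t * (1 - 1/n)) * p + Real.exp (t * (-(1/n))) * (1 - p)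
      = Real.exp (-(t/n)) * (1 + p * (Real.exp t - 1)) := by
    have e1 : t * (1 - 1/n) = t + -(t/n) := by ring
    have e2 : t * (-(1/n)) = -(t/n) := by ring
    rw [e1, e2, Real.exp_add]
    ring
  rw [key]
  have hexp1 : 1 + p * (Real.exp t - 1) ≤ Real.exp (p * (Real.exp t - 1)) := by
    linarith [Real.add_one_le_exp (p * (Real.exp t - 1))]
  have hnn : 0 ≤ 1 + p * (Real.exp t - 1) := by
    have : 1 ≤ Real.exp t := by
      rw [show (1:ℝ) = Real.exp 0 by simp]; exact Real.exp_le_exp.2 ht0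
    nlinarith
  calc Real.exp (-(t/n)) * (1 + p * (Real.exp t - 1))
      ≤ Real.exp (-(t/n)) * Real.exp (p * (Real.exp t - 1)) := by
        apply mul_le_mul_of_nonneg_left hexp1 (Real.exp_nonneg _)
    _ = Real.exp (-(t/n) + p * (Real.exp t - 1)) := (Real.exp_add _ _).symm
    _ ≤ Real.exp (-(η^2/(4*n))) := by
        apply Real.exp_le_exp.2
        have hq : Real.exp t - 1 ≤ t + t^2 := by
          have := aux_exp_quad ht0 ht1; linarith
        have h5 : p * (Real.exp t - 1) ≤ p * (t + t^2) :=
          mul_le_mul_of_nonneg_left hq hp0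
        have h6 : -(t/n) + p * (t + t^2) ≤ -(η^2/(4*n)) := by
          rw [ht, hp]
          have e1 : -(η/2/n) + (1-η)/n * (η/2 + (η/2)^2)
              = (-(η/2) + (1-η)*(η/2+(η/2)^2))/n := by ring
          have e2 : -(η^2/(4*n)) = (-(η^2/4))/n := by ring
          rw [e1, e2, div_le_div_iff₀ hn0 hn0]
          nlinarith [mul_nonneg (mul_nonneg hη0.le (mul_nonneg hη0.le hη0.le)) hn0.le]
        linarith


lemma aux_ae_two {Ω : Type} [MeasurableSpace Ω] (P : Measure Ω) [IsProbabilityMeasure P]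
    (X : Ω → ℝ) (hX : Measurable X) (a b pa pb : ℝ) (hab : a ≠ b)
    (hpa : 0 ≤ pa) (hpb : 0 ≤ pb)
    (hPa : P {ω | X ω = a} = ENNReal.ofReal pa)
    (hPb : P {ω | X ω = b} = ENNReal.ofReal pb)
    (hsum : pa + pb = 1) :
    ∀ᵐ ω ∂P, X ω = a ∨ X ω = b := by
  have hA : MeasurableSet {ω | X ω = a} := hX (measurableSet_singleton a)
  have hB : MeasurableSet {ω | X ω = b} := hX (measurableSet_singleton b)
  have hdisj : Disjoint {ω | X ω = a} {ω | X ω = b} := by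
    rw [Set.disjoint_left]
    intro ω h1 h2
    exact hab (h1.symm.trans h2)
  have hU : P ({ω | X ω = a} ∪ {ω | X ω = b}) = 1 := by
    rw [measure_union hdisj hB, hPa, hPb, ← ENNReal.ofReal_add hpa hpb, hsum,
      ENNReal.ofReal_one]
  have h0 : P (({ω | X ω = a} ∪ {ω | X ω = b})ᶜ) = 0 :=
    (prob_compl_eq_zero_iff (hA.union hB)).2 hU
  have hset : {ω | ¬(X ω = a ∨ X ω = b)} = ({ω | X ω = a} ∪ {ω | X ω = b})ᶜ := by
    ext ω; simp [not_or]
  rw [ae_iff, hset]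
  exact h0

lemma aux_mgf_eq {Ω : Type} [MeasurableSpace Ω] (P : Measure Ω) [IsProbabilityMeasure P]
    (X : Ω → ℝ) (hX : Measurable X) (a b pa pb t : ℝ) (hab : a ≠ b)
    (hpa : 0 ≤ pa) (hpb : 0 ≤ pb)
    (hPa : P {ω | X ω = a} = ENNReal.ofReal pa)
    (hPb : P {ω | X ω = b} = ENNReal.ofReal pb)
    (hsum : pa + pb = 1) :
    mgf X P t = Real.exp (t * a) * pa + Real.exp (t * b) * pb := by
  have hA : MeasurableSet {ω | X ω = a} := hX (measurableSet_singleton a)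
  have hB : MeasurableSet {ω | X ω = b} := hX (measurableSet_singleton b)
  have hae := aux_ae_two P X hX a b pa pb hab hpa hpb hPa hPb hsum
  have hcongr : (fun ω => Real.exp (t * X ω))
      =ᵐ[P] fun ω => Set.indicator {ω | X ω = a} (fun _ => Real.exp (t * a)) ω
        + Set.indicator {ω | X ω = b} (fun _ => Real.exp (t * b)) ω := by
    filter_upwards [hae] with ω hω
    rcases hω with h | h
    · have hωa : ω ∈ {ω | X ω = a} := h
      have hωb : ω ∉ {ω | X ω = b} := by simp only [Set.mem_setOf_eq, h]; exact hab
      rw [Set.indicator_of_mem hωa, Set.indicator_of_notMem hωb, h, add_zero]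
    · have hωb : ω ∈ {ω | X ω = b} := h
      have hωa : ω ∉ {ω | X ω = a} := by
        simp only [Set.mem_setOf_eq, h]; exact fun hh => hab hh.symm
      rw [Set.indicator_of_mem hωb, Set.indicator_of_notMem hωa, h, zero_add]
  rw [mgf, integral_congr_ae hcongr, integral_add
      ((integrable_const _).indicator hA) ((integrable_const _).indicator hB),
    integral_indicator hA, integral_indicator hB, setIntegral_const, setIntegral_const,
    measureReal_def, measureReal_def, hPa, hPb, ENNReal.toReal_ofReal hpa, ENNReal.toReal_ofReal hpb]
  simp [mul_comm, smul_eq_mul]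


set_option maxHeartbeats 2000000 in
/-- Fix `η ∈ (0,1)`.  There exists `N₀` (depending only on `η`) such that for every integer
`N ≥ N₀`, every real `Δ ≥ 1`, and every `λ` with `0 < λ ≤ η²/(128 N²)`, the first hitting
time `T₀ := inf{k ≥ 0 : S_k ≤ 0}` of `(−∞,0]` for the downward-drifted walk started at `Δ`
satisfies `E[e^{λ T₀}] ≤ (3/2) · exp(2ΔNλ/η)`.  The expectation is taken as a Lebesgue
(lower) integral, and `T₀` is the (ℕ-valued) infimum of the hitting set. -/
theorem stmt8 (η : ℝ) (hη0 : 0 < η) (hη1 : η < 1) :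
    ∃ N₀ : ℕ, ∀ N : ℕ, N₀ ≤ N →
    ∀ (Ω : Type) (_ : MeasurableSpace Ω) (P : Measure Ω), IsProbabilityMeasure P →
    ∀ ξ : ℕ → Ω → ℝ,
      (∀ i, Measurable (ξ i)) →
      iIndepFun ξ P →
      (∀ i, P {ω | ξ i ω = 1 - 1 / N} = ENNReal.ofReal ((1 - η) / N) ∧
            P {ω | ξ i ω = -(1 / N)} = ENNReal.ofReal (1 - (1 - η) / N)) →
    ∀ Δ : ℝ, 1 ≤ Δ →
    ∀ lam : ℝ, 0 < lam → lam ≤ η ^ 2 / (128 * N ^ 2) →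
    ∀ T₀ : Ω → ℕ,
      (∀ ω, T₀ ω = sInf {k : ℕ | Δ + ∑ i ∈ Finset.range k, ξ i ω ≤ 0}) →
      (∫⁻ ω, ENNReal.ofReal (Real.exp (lam * T₀ ω)) ∂P)
        ≤ ENNReal.ofReal ((3 / 2) * Real.exp (2 * Δ * N * lam / η)) := by
  refine ⟨2, ?_⟩
  intro N hN Ω mΩ P hPprob ξ hmeas hindep hdist Δ hΔ lam hlam0 hlamle T₀ hT₀
  haveI := hPprob
  set n : ℝ := (N : ℝ) with hn_def
  have hn2 : (2:ℝ) ≤ n := by rw [hn_def]; exact_mod_cast hN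
  have hn0 : (0:ℝ) < n := by linarith
  set t : ℝ := η / 2 with ht_def
  have ht0 : 0 ≤ t := by rw [ht_def]; positivity
  set c : ℝ := η ^ 2 / (4 * n) with hc_def
  have hc0 : 0 < c := by rw [hc_def]; positivity
  have hc18 : c ≤ 1 / 8 := by
    rw [hc_def, div_le_div_iff₀ (by positivity) (by norm_num)]
    nlinarith
  have hlamc : lam ≤ c / (32 * n) := by
    have he : η ^ 2 / (128 * n ^ 2) = c / (32 * n) := by
      rw [hc_def]; field_simp; ring
    rw [← he]; exact hlamle
  have hlamc2 : lam ≤ c / 2 := by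
    have h1 : c / (32 * n) ≤ c / 2 := by
      apply div_le_div_of_nonneg_left hc0.le (by norm_num) (by nlinarith)
    linarith
  have hlam512 : lam ≤ 1 / 512 := by
    have h2 : η ^ 2 / (128 * n ^ 2) ≤ 1 / 512 := by
      rw [div_le_div_iff₀ (by positivity) (by norm_num)]
      nlinarith
    linarith
  -- two-point structure
  have hp0 : 0 ≤ (1 - η) / n := div_nonneg (by linarith) hn0.le
  have h1mp : 0 ≤ 1 - (1 - η) / n := by
    have : (1 - η) / n ≤ 1 := by rw [div_le_one hn0]; linarith
    linarith
  have hab : (1 - 1/n : ℝ) ≠ -(1/n) := by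
    intro h
    have h2 : (1:ℝ) = 0 := by linarith
    exact one_ne_zero h2
  have hdist' : ∀ i, P {ω | ξ i ω = 1 - 1/n} = ENNReal.ofReal ((1-η)/n) ∧
      P {ω | ξ i ω = -(1/n)} = ENNReal.ofReal (1 - (1-η)/n) := hdist
  have hmgf_le : ∀ i, mgf (ξ i) P t ≤ Real.exp (-c) := by
    intro i
    have heq := aux_mgf_eq P (ξ i) (hmeas i) (1 - 1/n) (-(1/n)) ((1-η)/n) (1 - (1-η)/n) t hab
      hp0 h1mp (hdist' i).1 (hdist' i).2 (by ring)
    rw [heq, ht_def, hc_def]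
    exact aux_step_bound hη0 hη1 hn2
  have hae : ∀ i, ∀ᵐ ω ∂P, ξ i ω = 1 - 1/n ∨ ξ i ω = -(1/n) := fun i =>
    aux_ae_two P (ξ i) (hmeas i) _ _ _ _ hab hp0 h1mp (hdist' i).1 (hdist' i).2 (by ring)
  have haeall : ∀ᵐ ω ∂P, ∀ i, ξ i ω = 1 - 1/n ∨ ξ i ω = -(1/n) := ae_all_iff.2 hae
  have hsum_meas : ∀ k, Measurable (fun ω => ∑ i ∈ Finset.range k, ξ i ω) := fun k =>
    Finset.measurable_sum _ (fun i _ => hmeas i)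
  have hsapp : ∀ (k : ℕ) ω, (∑ i ∈ Finset.range k, ξ i) ω = ∑ i ∈ Finset.range k, ξ i ω :=
    fun k ω => by simp
  -- integrability
  have hint : ∀ k : ℕ, Integrable (fun ω => Real.exp (t * (∑ i ∈ Finset.range k, ξ i) ω)) P := by
    intro k
    have hmeas' : Measurable fun ω => Real.exp (t * (∑ i ∈ Finset.range k, ξ i) ω) := by
      have hfun : (fun ω => Real.exp (t * (∑ i ∈ Finset.range k, ξ i) ω))
          = fun ω => Real.exp (t * ∑ i ∈ Finset.range k, ξ i ω) := by
        funext ω; rw [hsapp]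
      rw [hfun]
      exact ((hsum_meas k).const_mul t).exp
    refine Integrable.mono' (integrable_const (Real.exp (t * k))) hmeas'.aestronglyMeasurable ?_
    filter_upwards [haeall] with ω hω
    rw [Real.norm_eq_abs, abs_of_nonneg (Real.exp_nonneg _)]
    apply Real.exp_le_exp.2
    apply mul_le_mul_of_nonneg_left ?_ ht0
    rw [hsapp]
    calc ∑ i ∈ Finset.range k, ξ i ω ≤ ∑ _i ∈ Finset.range k, (1:ℝ) := by
          apply Finset.sum_le_sum
          intro i _
          have h1n : 0 ≤ 1/n := by positivity
          rcases hω i with h | h <;> rw [h] <;> linarith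
      _ = k := by simp
  -- Chernoff bound
  have hXk_mgf : ∀ k : ℕ, mgf (∑ i ∈ Finset.range k, ξ i) P t ≤ Real.exp (-((k:ℝ)*c)) := by
    intro k
    rw [hindep.mgf_sum hmeas]
    calc ∏ i ∈ Finset.range k, mgf (ξ i) P t ≤ ∏ _i ∈ Finset.range k, Real.exp (-c) :=
          Finset.prod_le_prod (fun i _ => mgf_nonneg) (fun i _ => hmgf_le i)
      _ = Real.exp (-c) ^ k := by rw [Finset.prod_const, Finset.card_range]
      _ = Real.exp (-((k:ℝ)*c)) := by rw [← Real.exp_nat_mul]; ring_nf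
  have hcher : ∀ k : ℕ, P {ω | k < T₀ ω} ≤ ENNReal.ofReal (Real.exp (t*Δ - k*c)) := by
    intro k
    have hsub : {ω | k < T₀ ω} ⊆ {ω | -Δ ≤ (∑ i ∈ Finset.range k, ξ i) ω} := by
      intro ω hω
      simp only [Set.mem_setOf_eq] at hω ⊢
      by_contra hcon
      push_neg at hcon
      rw [hsapp] at hcon
      have hk : k ∈ {m : ℕ | Δ + ∑ i ∈ Finset.range m, ξ i ω ≤ 0} := by
        simp only [Set.mem_setOf_eq]; linarith
      have hle := Nat.sInf_le hk
      rw [hT₀ ω] at hω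
      omega
    calc P {ω | k < T₀ ω} ≤ P {ω | -Δ ≤ (∑ i ∈ Finset.range k, ξ i) ω} := measure_mono hsub
      _ = ENNReal.ofReal ((P {ω | -Δ ≤ (∑ i ∈ Finset.range k, ξ i) ω}).toReal) :=
          (ENNReal.ofReal_toReal (measure_ne_top _ _)).symm
      _ ≤ ENNReal.ofReal (Real.exp (-t * -Δ) * mgf (∑ i ∈ Finset.range k, ξ i) P t) :=
          ENNReal.ofReal_le_ofReal (measure_ge_le_exp_mul_mgf (-Δ) ht0 (hint k))
      _ ≤ ENNReal.ofReal (Real.exp (t*Δ - k*c)) := by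
          apply ENNReal.ofReal_le_ofReal
          have h1 : Real.exp (-t * -Δ) = Real.exp (t*Δ) := by ring_nf
          have h2 : Real.exp (t*Δ - (k:ℝ)*c) = Real.exp (t*Δ) * Real.exp (-((k:ℝ)*c)) := by
            rw [← Real.exp_add]; ring_nf
          rw [h1, h2]
          exact mul_le_mul_of_nonneg_left (hXk_mgf k) (Real.exp_nonneg _)
  -- measurability of tail events
  have hSmeas : ∀ m : ℕ, MeasurableSet {ω | Δ + ∑ i ∈ Finset.range m, ξ i ω ≤ 0} := fun m =>
    measurableSet_le (measurable_const.add (hsum_meas m)) measurable_const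
  have hchar : ∀ (j : ℕ) (ω : Ω), j < T₀ ω ↔
      ((∃ m, Δ + ∑ i ∈ Finset.range m, ξ i ω ≤ 0) ∧
        ∀ k, k ≤ j → ¬(Δ + ∑ i ∈ Finset.range k, ξ i ω ≤ 0)) := by
    intro j ω
    rw [hT₀ ω]
    constructor
    · intro hj
      have hne : {k : ℕ | Δ + ∑ i ∈ Finset.range k, ξ i ω ≤ 0}.Nonempty := by
        by_contra hcon
        rw [Set.not_nonempty_iff_eq_empty] at hcon
        rw [hcon, Nat.sInf_empty] at hj
        omega
      refine ⟨hne, ?_⟩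
      intro k hk hmem
      have hle := Nat.sInf_le (show k ∈ {m : ℕ | Δ + ∑ i ∈ Finset.range m, ξ i ω ≤ 0} from hmem)
      omega
    · rintro ⟨⟨m, hm⟩, hall⟩
      by_contra hcon
      push_neg at hcon
      have hmem := Nat.sInf_mem (⟨m, hm⟩ : {k : ℕ | Δ + ∑ i ∈ Finset.range k, ξ i ω ≤ 0}.Nonempty)
      exact hall _ hcon hmem
  have hTmeas : ∀ j : ℕ, MeasurableSet {ω | j < T₀ ω} := by
    intro j
    have hset : {ω | j < T₀ ω} = (⋃ m, {ω | Δ + ∑ i ∈ Finset.range m, ξ i ω ≤ 0}) ∩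
        (⋂ k, ⋂ (_ : k ≤ j), {ω | Δ + ∑ i ∈ Finset.range k, ξ i ω ≤ 0}ᶜ) := by
      ext ω
      simp only [Set.mem_setOf_eq, Set.mem_inter_iff, Set.mem_iUnion, Set.mem_iInter,
        Set.mem_compl_iff]
      exact hchar j ω
    rw [hset]
    exact (MeasurableSet.iUnion (fun m => hSmeas m)).inter
      (MeasurableSet.iInter fun k => MeasurableSet.iInter fun _ => (hSmeas k).compl)
  -- decomposition of exp(lam * T₀)
  set D : ℕ → ℝ≥0∞ :=
    fun j => ENNReal.ofReal (Real.exp (lam*((j:ℝ)+1)) - Real.exp (lam*(j:ℝ))) with hD_def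
  have hDnn : ∀ j : ℕ, 0 ≤ Real.exp (lam*((j:ℝ)+1)) - Real.exp (lam*(j:ℝ)) := by
    intro j
    have : lam*(j:ℝ) ≤ lam*((j:ℝ)+1) := by nlinarith [hlam0.le]
    have := Real.exp_le_exp.2 this
    linarith
  have hDsum : ∀ m : ℕ, ∑ j ∈ Finset.range m, D j = ENNReal.ofReal (Real.exp (lam*(m:ℝ)) - 1) := by
    intro m
    rw [hD_def, ← ENNReal.ofReal_sum_of_nonneg (fun j _ => hDnn j)]
    congr 1
    have hcast : ∀ j : ℕ, Real.exp (lam*((j:ℝ)+1)) = Real.exp (lam*(((j+1 : ℕ)):ℝ)) := by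
      intro j; push_cast; ring_nf
    calc ∑ j ∈ Finset.range m, (Real.exp (lam*((j:ℝ)+1)) - Real.exp (lam*(j:ℝ)))
        = ∑ j ∈ Finset.range m,
            (Real.exp (lam*(((j+1:ℕ)):ℝ)) - Real.exp (lam*(j:ℝ))) := by
          apply Finset.sum_congr rfl; intro j _; rw [hcast j]
      _ = Real.exp (lam*(m:ℝ)) - Real.exp (lam*((0:ℕ):ℝ)) :=
          Finset.sum_range_sub (fun j : ℕ => Real.exp (lam*(j:ℝ))) m
      _ = Real.exp (lam*(m:ℝ)) - 1 := by norm_num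
  have hpt : ∀ ω, ENNReal.ofReal (Real.exp (lam * T₀ ω)) =
      1 + ∑' j : ℕ, Set.indicator {ω' | j < T₀ ω'} (fun _ => D j) ω := by
    intro ω
    have hts : ∑' j : ℕ, Set.indicator {ω' | j < T₀ ω'} (fun _ => D j) ω
        = ∑ j ∈ Finset.range (T₀ ω), Set.indicator {ω' | j < T₀ ω'} (fun _ => D j) ω := by
      apply tsum_eq_sum
      intro j hj
      rw [Finset.mem_range, not_lt] at hj
      apply Set.indicator_of_notMem
      simp only [Set.mem_setOf_eq, not_lt]
      exact hj
    have hts2 : ∑ j ∈ Finset.range (T₀ ω), Set.indicator {ω' | j < T₀ ω'} (fun _ => D j) ω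
        = ∑ j ∈ Finset.range (T₀ ω), D j := by
      apply Finset.sum_congr rfl
      intro j hj
      rw [Finset.mem_range] at hj
      exact Set.indicator_of_mem (show ω ∈ {ω' | j < T₀ ω'} from hj) _
    rw [hts, hts2, hDsum]
    rw [← ENNReal.ofReal_one, ← ENNReal.ofReal_add (by norm_num)]
    · congr 1; ring
    · have : (1:ℝ) = Real.exp 0 := by norm_num
      rw [this]
      have := Real.exp_le_exp.2 (show (0:ℝ) ≤ lam * (T₀ ω : ℝ) by positivity)
      linarith
  -- main computation
  have hmain : (∫⁻ ω, ENNReal.ofReal (Real.exp (lam * T₀ ω)) ∂P)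
      = 1 + ∑' j : ℕ, D j * P {ω | j < T₀ ω} := by
    rw [lintegral_congr hpt, lintegral_add_left measurable_const]
    rw [lintegral_const, measure_univ, mul_one]
    congr 1
    rw [lintegral_tsum (fun j => (measurable_const.indicator (hTmeas j)).aemeasurable)]
    apply tsum_congr
    intro j
    rw [lintegral_indicator_const (hTmeas j)]
  rw [hmain]
  set K : ℕ := ⌈2*Δ*n/η⌉₊ with hK_def
  have hKge : 2*Δ*n/η ≤ (K:ℝ) := Nat.le_ceil _
  have htKc : t*Δ ≤ (K:ℝ)*c := by
    have h1 : (2*Δ*n/η)*c ≤ (K:ℝ)*c := mul_le_mul_of_nonneg_right hKge hc0.le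
    have h2 : (2*Δ*n/η)*c = t*Δ := by
      rw [ht_def, hc_def]; field_simp; ring
    linarith
  have hexplam1 : 0 ≤ Real.exp lam - 1 := by
    have : Real.exp 0 ≤ Real.exp lam := Real.exp_le_exp.2 hlam0.le
    simp only [Real.exp_zero] at this
    linarith
  -- part A
  have hpartA : ∑ j ∈ Finset.range K, D j * P {ω | j < T₀ ω}
      ≤ ENNReal.ofReal (Real.exp (lam*(K:ℝ)) - 1) := by
    calc ∑ j ∈ Finset.range K, D j * P {ω | j < T₀ ω}
        ≤ ∑ j ∈ Finset.range K, D j := by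
          apply Finset.sum_le_sum
          intro j _
          calc D j * P {ω | j < T₀ ω} ≤ D j * 1 := mul_le_mul_right prob_le_one _
            _ = D j := mul_one _
      _ = ENNReal.ofReal (Real.exp (lam*(K:ℝ)) - 1) := hDsum K
  -- part B
  have hbR : ∀ i : ℕ,
      (Real.exp (lam*(((i+K:ℕ):ℝ)+1)) - Real.exp (lam*((i+K:ℕ):ℝ)))
          * Real.exp (t*Δ - ((i+K:ℕ):ℝ)*c)
        ≤ ((Real.exp lam - 1) * Real.exp (lam*(K:ℝ))) * Real.exp (lam - c) ^ i := by
    intro i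
    have he1 : Real.exp (lam*(((i+K:ℕ):ℝ)+1)) - Real.exp (lam*((i+K:ℕ):ℝ))
        = (Real.exp lam - 1) * Real.exp (lam*((i+K:ℕ):ℝ)) := by
      rw [show lam*(((i+K:ℕ):ℝ)+1) = lam + lam*((i+K:ℕ):ℝ) by ring, Real.exp_add]
      ring
    have he2 : Real.exp (lam - c) ^ i = Real.exp ((i:ℝ)*(lam - c)) := by
      rw [Real.exp_nat_mul]
    rw [he1, he2]
    calc (Real.exp lam - 1) * Real.exp (lam*((i+K:ℕ):ℝ)) * Real.exp (t*Δ - ((i+K:ℕ):ℝ)*c)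
        = (Real.exp lam - 1) * Real.exp (lam*((i+K:ℕ):ℝ) + (t*Δ - ((i+K:ℕ):ℝ)*c)) := by
          rw [mul_assoc, ← Real.exp_add]
      _ ≤ (Real.exp lam - 1) * Real.exp (lam*(K:ℝ) + (i:ℝ)*(lam - c)) := by
          apply mul_le_mul_of_nonneg_left _ hexplam1
          apply Real.exp_le_exp.2
          push_cast
          nlinarith [htKc]
      _ = ((Real.exp lam - 1) * Real.exp (lam*(K:ℝ))) * Real.exp ((i:ℝ)*(lam - c)) := by
          rw [Real.exp_add]; ring
  have hterm : ∀ i : ℕ, D (i+K) * P {ω | (i+K) < T₀ ω}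
      ≤ ENNReal.ofReal ((Real.exp lam - 1) * Real.exp (lam*(K:ℝ)))
          * (ENNReal.ofReal (Real.exp (lam - c))) ^ i := by
    intro i
    calc D (i+K) * P {ω | (i+K) < T₀ ω}
        ≤ D (i+K) * ENNReal.ofReal (Real.exp (t*Δ - ((i+K:ℕ):ℝ)*c)) :=
          mul_le_mul_right (hcher (i+K)) _
      _ = ENNReal.ofReal ((Real.exp (lam*(((i+K:ℕ):ℝ)+1)) - Real.exp (lam*((i+K:ℕ):ℝ)))
            * Real.exp (t*Δ - ((i+K:ℕ):ℝ)*c)) := by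
          simp only [hD_def]
          rw [← ENNReal.ofReal_mul (hDnn (i+K))]
      _ ≤ ENNReal.ofReal (((Real.exp lam - 1) * Real.exp (lam*(K:ℝ))) * Real.exp (lam - c) ^ i) :=
          ENNReal.ofReal_le_ofReal (hbR i)
      _ = ENNReal.ofReal ((Real.exp lam - 1) * Real.exp (lam*(K:ℝ)))
            * (ENNReal.ofReal (Real.exp (lam - c))) ^ i := by
          rw [ENNReal.ofReal_mul (mul_nonneg hexplam1 (Real.exp_nonneg _)),
            ENNReal.ofReal_pow (Real.exp_nonneg _)]
  -- inverse bound
  have hexpneg : Real.exp (lam - c) ≤ 1 - c/4 := by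
    have h1 : lam - c = -(c - lam) := by ring
    rw [h1]
    have h2 := aux_exp_neg (show 0 ≤ c - lam by linarith) (show c - lam ≤ 1 by linarith)
    linarith
  have h14 : ENNReal.ofReal (c/4) ≤ 1 - ENNReal.ofReal (Real.exp (lam - c)) := by
    have e1 : (1:ℝ≥0∞) - ENNReal.ofReal (1 - c/4) = ENNReal.ofReal (c/4) := by
      rw [← ENNReal.ofReal_one, ← ENNReal.ofReal_sub _ (by linarith : (0:ℝ) ≤ 1 - c/4)]
      congr 1
      ring
    rw [← e1]
    exact tsub_le_tsub_left (ENNReal.ofReal_le_ofReal hexpneg) 1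
  have hinv : (1 - ENNReal.ofReal (Real.exp (lam - c)))⁻¹ ≤ ENNReal.ofReal (4/c) := by
    have h2 : (1 - ENNReal.ofReal (Real.exp (lam - c)))⁻¹ ≤ (ENNReal.ofReal (c/4))⁻¹ :=
      ENNReal.inv_le_inv' h14
    have h3 : (ENNReal.ofReal (c/4))⁻¹ = ENNReal.ofReal ((c/4)⁻¹) :=
      (ENNReal.ofReal_inv_of_pos (by positivity)).symm
    rw [h3, inv_div] at h2
    exact h2
  have hpartB : ∑' i : ℕ, D (i+K) * P {ω | (i+K) < T₀ ω}
      ≤ ENNReal.ofReal (((Real.exp lam - 1) * Real.exp (lam*(K:ℝ))) * (4/c)) := by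
    calc ∑' i : ℕ, D (i+K) * P {ω | (i+K) < T₀ ω}
        ≤ ∑' i : ℕ, ENNReal.ofReal ((Real.exp lam - 1) * Real.exp (lam*(K:ℝ)))
            * (ENNReal.ofReal (Real.exp (lam - c))) ^ i := ENNReal.tsum_le_tsum hterm
      _ = ENNReal.ofReal ((Real.exp lam - 1) * Real.exp (lam*(K:ℝ)))
            * ∑' i : ℕ, (ENNReal.ofReal (Real.exp (lam - c))) ^ i := ENNReal.tsum_mul_left
      _ = ENNReal.ofReal ((Real.exp lam - 1) * Real.exp (lam*(K:ℝ)))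
            * (1 - ENNReal.ofReal (Real.exp (lam - c)))⁻¹ := by
          rw [ENNReal.tsum_geometric]
      _ ≤ ENNReal.ofReal ((Real.exp lam - 1) * Real.exp (lam*(K:ℝ)))
            * ENNReal.ofReal (4/c) := mul_le_mul_right hinv _
      _ = ENNReal.ofReal (((Real.exp lam - 1) * Real.exp (lam*(K:ℝ))) * (4/c)) :=
          (ENNReal.ofReal_mul (mul_nonneg hexplam1 (Real.exp_nonneg _))).symm
  -- combine
  have hsplit : ∑' j : ℕ, D j * P {ω | j < T₀ ω}
      = (∑ j ∈ Finset.range K, D j * P {ω | j < T₀ ω})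
        + ∑' i : ℕ, D (i+K) * P {ω | (i+K) < T₀ ω} :=
    (Summable.sum_add_tsum_nat_add' (f := fun j : ℕ => D j * P {ω | j < T₀ ω}) (k := K)
      ENNReal.summable).symm
  have hElamK : 0 ≤ Real.exp (lam*(K:ℝ)) - 1 := by
    have : Real.exp 0 ≤ Real.exp (lam*(K:ℝ)) := Real.exp_le_exp.2 (by positivity)
    simp only [Real.exp_zero] at this
    linarith
  have hfinal : 1 + ((Real.exp (lam*(K:ℝ)) - 1)
        + ((Real.exp lam - 1) * Real.exp (lam*(K:ℝ))) * (4/c))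
      ≤ (3/2) * Real.exp (2*Δ*n*lam/η) := by
    have hK1 : (K:ℝ) ≤ 2*Δ*n/η + 1 := by
      rw [hK_def]
      exact (Nat.ceil_lt_add_one (by positivity)).le
    have hE : Real.exp (lam*(K:ℝ)) ≤ Real.exp (2*Δ*n*lam/η) * Real.exp lam := by
      rw [← Real.exp_add]
      apply Real.exp_le_exp.2
      have h1 : lam*(K:ℝ) ≤ lam*(2*Δ*n/η + 1) := mul_le_mul_of_nonneg_left hK1 hlam0.le
      have h2 : lam*(2*Δ*n/η + 1) = 2*Δ*n*lam/η + lam := by ring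
      linarith
    have hq := aux_exp_quad hlam0.le (by linarith : lam ≤ 1)
    have hexplam2 : Real.exp lam - 1 ≤ 2*lam := by nlinarith
    have hfrac : (Real.exp lam - 1) * (4/c) ≤ 1/8 := by
      have h1 : (Real.exp lam - 1) * (4/c) ≤ (2*lam) * (4/c) :=
        mul_le_mul_of_nonneg_right hexplam2 (by positivity)
      have h2 : (2*lam) * (4/c) ≤ (2*(c/(32*n))) * (4/c) := by
        apply mul_le_mul_of_nonneg_right _ (by positivity)
        linarith
      have h3 : (2*(c/(32*n))) * (4/c) = 1/(4*n) := by
        field_simp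
        ring
      have h4 : 1/(4*n) ≤ 1/8 := by
        rw [div_le_div_iff₀ (by positivity) (by norm_num)]
        linarith
      linarith
    have hexplam3 : Real.exp lam ≤ 1 + 1/256 := by nlinarith
    have hEpos : 0 < Real.exp (2*Δ*n*lam/η) := Real.exp_pos _
    have hfr0 : 0 ≤ (Real.exp lam - 1) * (4/c) := mul_nonneg hexplam1 (by positivity)
    calc 1 + ((Real.exp (lam*(K:ℝ)) - 1)
          + ((Real.exp lam - 1) * Real.exp (lam*(K:ℝ))) * (4/c))
        = Real.exp (lam*(K:ℝ)) * (1 + (Real.exp lam - 1) * (4/c)) := by ring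
      _ ≤ (Real.exp (2*Δ*n*lam/η) * Real.exp lam) * (1 + 1/8) := by
          apply mul_le_mul hE (by linarith) (by linarith) (by positivity)
      _ ≤ (3/2) * Real.exp (2*Δ*n*lam/η) := by nlinarith
  calc 1 + ∑' j : ℕ, D j * P {ω | j < T₀ ω}
      = 1 + ((∑ j ∈ Finset.range K, D j * P {ω | j < T₀ ω})
          + ∑' i : ℕ, D (i+K) * P {ω | (i+K) < T₀ ω}) := by rw [hsplit]
    _ ≤ 1 + (ENNReal.ofReal (Real.exp (lam*(K:ℝ)) - 1)
          + ENNReal.ofReal (((Real.exp lam - 1) * Real.exp (lam*(K:ℝ))) * (4/c))) :=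
        add_le_add_right (add_le_add hpartA hpartB) 1
    _ = ENNReal.ofReal (1 + ((Real.exp (lam*(K:ℝ)) - 1)
          + ((Real.exp lam - 1) * Real.exp (lam*(K:ℝ))) * (4/c))) := by
        rw [← ENNReal.ofReal_one, ← ENNReal.ofReal_add hElamK
          (mul_nonneg (mul_nonneg hexplam1 (Real.exp_nonneg _)) (by positivity)),
          ← ENNReal.ofReal_add (by norm_num) (by positivity)]
    _ ≤ ENNReal.ofReal ((3/2) * Real.exp (2*Δ*n*lam/η)) := ENNReal.ofReal_le_ofReal hfinal
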